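/- For n ≥ 4, the total restrained domination number of the cycle C_n equals 2⌈n/4⌉−1 if n ≡ 1 (mod 4), equals 2⌈n/4⌉+1 if n ≡ 3 (mod 4), and equals 2⌈n/4⌉ otherwise. -/

import Mathlib

open SimpleGraph

/-- `S` is a `k`-tuple total restrained dominating set of `G`: every vertex has at
least `k` neighbors in `S`, and every vertex outside `S` has at least `k` neighbors
outside `S`. -/
def IsKTRDS {V : Type*} (G : SimpleGraph V) (k : ℕ) (S : Set V) : Prop :=
  (∀ v : V, k ≤ (S ∩ G.neighborSet v).ncard) ∧
  (∀ v : V, v ∉ S → k ≤ (Sᶜ ∩ G.neighborSet v).ncard)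

/-- `S` is a `k`-tuple total dominating set of `G`. -/
def IsKTDS {V : Type*} (G : SimpleGraph V) (k : ℕ) (S : Set V) : Prop :=
  ∀ v : V, k ≤ (S ∩ G.neighborSet v).ncard

/-- The `k`-tuple total restrained domination number of `G`. -/
noncomputable def ktrdNum {V : Type*} (G : SimpleGraph V) (k : ℕ) : ℕ :=
  sInf {m | ∃ S : Set V, IsKTRDS G k S ∧ S.ncard = m}

/-- The `k`-tuple total domination number of `G`. -/
noncomputable def ktNum {V : Type*} (G : SimpleGraph V) (k : ℕ) : ℕ :=
  sInf {m | ∃ S : Set V, IsKTDS G k S ∧ S.ncard = m}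

/-- The `k`-tuple total restrained domatic number of `G`. -/
noncomputable def ktrdDomatic {V : Type*} (G : SimpleGraph V) (k : ℕ) : ℕ :=
  sSup {d | ∃ f : Fin d → Set V, (∀ i, IsKTRDS G k (f i)) ∧ ∀ v : V, ∃! i, v ∈ f i}

/-- The `k`-tuple total domatic number of `G`. -/
noncomputable def ktDomatic {V : Type*} (G : SimpleGraph V) (k : ℕ) : ℕ :=
  sSup {d | ∃ f : Fin d → Set V, (∀ i, IsKTDS G k (f i)) ∧ ∀ v : V, ∃! i, v ∈ f i}


open Finset

section helpers
variable {n : ℕ} [NeZero n]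

lemma myval_one (hn : 4 ≤ n) : ((1 : Fin n) : ℕ) = 1 := by
  rw [Fin.val_one']; exact Nat.mod_eq_of_lt (by omega)

lemma myval_two (hn : 4 ≤ n) : ((1 + 1 : Fin n) : ℕ) = 2 := by
  rw [Fin.val_add, myval_one hn]; exact Nat.mod_eq_of_lt (by omega)

lemma myval_three (hn : 4 ≤ n) : ((1 + 1 + 1 : Fin n) : ℕ) = 3 := by
  rw [Fin.val_add, myval_two hn, myval_one hn]; exact Nat.mod_eq_of_lt (by omega)

lemma one_ne (hn : 4 ≤ n) : (1 : Fin n) ≠ 0 := by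
  intro h; have := congrArg Fin.val h; rw [myval_one hn] at this; simp at this

lemma two_ne (hn : 4 ≤ n) : (1 + 1 : Fin n) ≠ 0 := by
  intro h; have := congrArg Fin.val h; rw [myval_two hn] at this; simp at this

lemma three_ne (hn : 4 ≤ n) : (1 + 1 + 1 : Fin n) ≠ 0 := by
  intro h; have := congrArg Fin.val h; rw [myval_three hn] at this; simp at this

lemma nbhd (hn : 4 ≤ n) (v : Fin n) :
    (cycleGraph n).neighborSet v = {v - 1, v + 1} := by
  obtain ⟨m, rfl⟩ : ∃ m, n = m + 2 := ⟨n - 2, by omega⟩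
  exact cycleGraph_neighborSet

lemma ktrds_iff (hn : 4 ≤ n) (S : Set (Fin n)) :
    IsKTRDS (cycleGraph n) 1 S ↔
      (∀ v : Fin n, v - 1 ∈ S ∨ v + 1 ∈ S) ∧
      (∀ v : Fin n, v ∉ S → v - 1 ∉ S ∨ v + 1 ∉ S) := by
  have hne : ∀ (T : Set (Fin n)) (v : Fin n),
      1 ≤ (T ∩ (cycleGraph n).neighborSet v).ncard ↔ (v - 1 ∈ T ∨ v + 1 ∈ T) := by
    intro T v
    rw [nbhd hn v, Nat.one_le_iff_ne_zero, ← Nat.pos_iff_ne_zero, Set.ncard_pos]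
    constructor
    · rintro ⟨x, hxT, hx⟩
      rcases hx with h | h <;> [left; right] <;> rwa [← h]
    · rintro (h | h)
      · exact ⟨v - 1, h, Or.inl rfl⟩
      · exact ⟨v + 1, h, Or.inr rfl⟩
  constructor
  · rintro ⟨hA, hB⟩
    refine ⟨fun v => (hne S v).mp (hA v), fun v hv => ?_⟩
    have := (hne Sᶜ v).mp (hB v hv)
    tauto
  · rintro ⟨hA, hB⟩
    refine ⟨fun v => (hne S v).mpr (hA v), fun v hv => (hne Sᶜ v).mpr ?_⟩
    have := hB v hv
    tauto
end helpers

section lower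
variable {n : ℕ} [NeZero n]

-- facts about "left endpoints" of complement runs
lemma facts (hn : 4 ≤ n) {S : Set (Fin n)}
    (h1 : ∀ v : Fin n, v - 1 ∈ S ∨ v + 1 ∈ S) {v : Fin n}
    (hv0 : v ∉ S) (hv1 : v + 1 ∉ S) :
    v + 1 + 1 ∈ S ∧ v + 1 + 1 + 1 ∈ S := by
  have e1 : v + 1 - 1 = v := add_sub_cancel_right v 1
  have e2 : v + 1 + 1 - 1 = v + 1 := add_sub_cancel_right _ 1
  constructor
  · rcases h1 (v + 1) with h | h
    · rw [e1] at h; exact absurd h hv0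
    · exact h
  · rcases h1 (v + 1 + 1) with h | h
    · rw [e2] at h; exact absurd h hv1
    · exact h

-- no two left endpoints within distance 3
lemma near (hn : 4 ≤ n) {S : Set (Fin n)}
    (h1 : ∀ v : Fin n, v - 1 ∈ S ∨ v + 1 ∈ S) {v w : Fin n}
    (hv0 : v ∉ S) (hv1 : v + 1 ∉ S) (hw0 : w ∉ S) (hw1 : w + 1 ∉ S) :
    w ≠ v + 1 ∧ w ≠ v + 1 + 1 ∧ w ≠ v + 1 + 1 + 1 := by
  obtain ⟨f2, f3⟩ := facts hn h1 hv0 hv1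
  refine ⟨?_, ?_, ?_⟩ <;> rintro rfl
  · exact hw1 f2
  · exact hw0 f2
  · exact hw0 f3

lemma lower (hn : 4 ≤ n) (S : Set (Fin n))
    (h1 : ∀ v : Fin n, v - 1 ∈ S ∨ v + 1 ∈ S)
    (h2 : ∀ v : Fin n, v ∉ S → v - 1 ∉ S ∨ v + 1 ∉ S) :
    n - 2 * (n / 4) ≤ S.ncard := by
  classical
  set L : Finset (Fin n) := univ.filter (fun v => v ∉ S ∧ v + 1 ∉ S) with hL
  have memL : ∀ v : Fin n, v ∈ L ↔ (v ∉ S ∧ v + 1 ∉ S) := by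
    intro v; simp [hL]
  -- the complement as a finset
  set C : Finset (Fin n) := univ.filter (fun v => v ∉ S) with hC
  have memC : ∀ v : Fin n, v ∈ C ↔ v ∉ S := by intro v; simp [hC]
  -- C is the union of pairs {v, v+1}, v ∈ L
  have hCU : C = L.biUnion (fun v => {v, v + 1}) := by
    ext c
    simp only [Finset.mem_biUnion, Finset.mem_insert, Finset.mem_singleton, memC, memL]
    constructor
    · intro hc
      rcases h2 c hc with h | h
      · exact ⟨c - 1, ⟨h, by rwa [sub_add_cancel]⟩, Or.inr (by rw [sub_add_cancel])⟩
      · exact ⟨c, ⟨hc, h⟩, Or.inl rfl⟩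
    · rintro ⟨v, ⟨hv0, hv1⟩, rfl | rfl⟩ <;> assumption
  have hpairdisj : ∀ v ∈ L, ∀ w ∈ L, v ≠ w →
      Disjoint ({v, v + 1} : Finset (Fin n)) {w, w + 1} := by
    intro v hv w hw hvw
    rw [memL] at hv hw
    obtain ⟨hv0, hv1⟩ := hv
    obtain ⟨hw0, hw1⟩ := hw
    have Hvw := near hn h1 hv0 hv1 hw0 hw1
    have Hwv := near hn h1 hw0 hw1 hv0 hv1
    rw [Finset.disjoint_left]
    intro x hx hx'
    simp only [Finset.mem_insert, Finset.mem_singleton] at hx hx'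
    rcases hx with rfl | rfl <;> rcases hx' with h | h
    · exact hvw h
    · exact Hwv.1 h
    · exact Hvw.1 h.symm
    · exact hvw (add_right_cancel h)
  have hCcard : C.card = 2 * L.card := by
    rw [hCU, Finset.card_biUnion hpairdisj]
    rw [Finset.sum_congr rfl (fun v hv => ?_), Finset.sum_const, smul_eq_mul, mul_comm]
    rw [Finset.card_insert_of_notMem, Finset.card_singleton]
    · simp only [Finset.mem_singleton]
      intro h
      exact one_ne hn (by rwa [left_eq_add] at h)
  -- blocks of 4 are disjoint
  have hblockdisj : ∀ v ∈ L, ∀ w ∈ L, v ≠ w →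
      Disjoint ({v, v + 1, v + 1 + 1, v + 1 + 1 + 1} : Finset (Fin n))
        {w, w + 1, w + 1 + 1, w + 1 + 1 + 1} := by
    intro v hv w hw hvw
    rw [memL] at hv hw
    obtain ⟨hv0, hv1⟩ := hv
    obtain ⟨hw0, hw1⟩ := hw
    obtain ⟨n1, n2, n3⟩ := near hn h1 hv0 hv1 hw0 hw1
    obtain ⟨m1, m2, m3⟩ := near hn h1 hw0 hw1 hv0 hv1
    rw [Finset.disjoint_left]
    intro x hx hx'
    simp only [Finset.mem_insert, Finset.mem_singleton] at hx hx'
    rcases hx with rfl | rfl | rfl | rfl <;> rcases hx' with h | h | h | h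
    · exact hvw h
    · exact m1 h
    · exact m2 h
    · exact m3 h
    · exact n1 h.symm
    · exact hvw (add_right_cancel h)
    · exact m1 (add_right_cancel h)
    · exact m2 (add_right_cancel h)
    · exact n2 h.symm
    · exact n1 (add_right_cancel h).symm
    · exact hvw (add_right_cancel (add_right_cancel h))
    · exact m1 (add_right_cancel (add_right_cancel h))
    · exact n3 h.symm
    · exact n2 (add_right_cancel h).symm
    · exact n1 (add_right_cancel (add_right_cancel h)).symm
    · exact hvw (add_right_cancel (add_right_cancel (add_right_cancel h)))
  have hblockcard : ∀ v : Fin n,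
      ({v, v + 1, v + 1 + 1, v + 1 + 1 + 1} : Finset (Fin n)).card = 4 := by
    intro v
    have d1 : v ≠ v + 1 := fun h => one_ne hn (by rwa [left_eq_add] at h)
    have d2 : v ≠ v + 1 + 1 := fun h => two_ne hn (by rwa [add_assoc, left_eq_add] at h)
    have d3 : v ≠ v + 1 + 1 + 1 := fun h => three_ne hn
      (by rwa [add_assoc, add_assoc, ← add_assoc (1:Fin n), left_eq_add] at h)
    have d4 : v + 1 ≠ v + 1 + 1 := fun h => one_ne hn (by rwa [left_eq_add] at h)
    have d5 : v + 1 ≠ v + 1 + 1 + 1 := fun h => two_ne hn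
      (by rwa [add_assoc, left_eq_add] at h)
    have d6 : v + 1 + 1 ≠ v + 1 + 1 + 1 := fun h => one_ne hn (by rwa [left_eq_add] at h)
    rw [Finset.card_insert_of_notMem (by simp [d1, d2, d3]),
        Finset.card_insert_of_notMem (by simp [d4, d5]),
        Finset.card_insert_of_notMem (by simp [d6]), Finset.card_singleton]
  have hLbound : 4 * L.card ≤ n := by
    have := Finset.card_le_univ
      (L.biUnion (fun v => ({v, v + 1, v + 1 + 1, v + 1 + 1 + 1} : Finset (Fin n))))
    rw [Finset.card_biUnion hblockdisj, Fintype.card_fin] at this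
    calc 4 * L.card = ∑ v ∈ L, 4 := by rw [Finset.sum_const, smul_eq_mul, mul_comm]
    _ = ∑ v ∈ L, ({v, v + 1, v + 1 + 1, v + 1 + 1 + 1} : Finset (Fin n)).card := by
        exact Finset.sum_congr rfl (fun v _ => (hblockcard v).symm)
    _ ≤ n := this
  -- conclude
  have hS : S.ncard = n - C.card := by
    have h1' : S.ncard = (univ.filter (fun v => v ∈ S)).card := by
      rw [Set.ncard_eq_toFinset_card']
      congr 1
      ext x; simp
    have := Finset.card_filter_add_card_filter_not (s := (univ : Finset (Fin n)))
      (p := fun v => v ∈ S)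
    rw [Finset.card_univ, Fintype.card_fin] at this
    rw [h1', hC]
    omega
  rw [hS, hCcard]
  omega
end lower

section upper
variable {n : ℕ} [NeZero n]

lemma val_addone (hn : 4 ≤ n) (v : Fin n) :
    ((v + 1 : Fin n) : ℕ) = if v.val + 1 = n then 0 else v.val + 1 := by
  rw [Fin.val_add, myval_one hn]
  split_ifs with h
  · rw [h, Nat.mod_self]
  · exact Nat.mod_eq_of_lt (by omega)

lemma val_subone (hn : 4 ≤ n) (v : Fin n) :
    ((v - 1 : Fin n) : ℕ) = if v.val = 0 then n - 1 else v.val - 1 := by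
  rw [Fin.sub_def]
  simp only [myval_one hn]
  split_ifs with h
  · rw [h, Nat.add_zero]
    exact Nat.mod_eq_of_lt (by omega)
  · have : n - 1 + v.val = (v.val - 1) + n := by omega
    rw [this, Nat.add_mod_right]
    exact Nat.mod_eq_of_lt (by omega)

def S0 (n : ℕ) : Set (Fin n) := {i : Fin n | i.val % 4 < 2 ∨ 4 * (n / 4) ≤ i.val}

lemma S0_h1 (hn : 4 ≤ n) : ∀ v : Fin n, v - 1 ∈ S0 n ∨ v + 1 ∈ S0 n := by
  intro v
  have hv := v.isLt
  simp only [S0, Set.mem_setOf_eq, val_addone hn, val_subone hn]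
  split_ifs <;> omega

lemma S0_h2 (hn : 4 ≤ n) : ∀ v : Fin n, v ∉ S0 n → v - 1 ∉ S0 n ∨ v + 1 ∉ S0 n := by
  intro v hv
  have hvlt := v.isLt
  simp only [S0, Set.mem_setOf_eq, val_addone hn, val_subone hn] at *
  split_ifs <;> omega

lemma S0_card (hn : 4 ≤ n) : (S0 n).ncard = n - 2 * (n / 4) := by
  classical
  have h1 : (S0 n).ncard = (univ.filter (fun i : Fin n => i.val % 4 < 2 ∨ 4 * (n / 4) ≤ i.val)).card := by
    rw [Set.ncard_eq_toFinset_card']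
    congr 1
    ext x; rw [Set.mem_toFinset]; simp [S0]
  -- complement count
  have hcompl : (univ.filter (fun i : Fin n => ¬(i.val % 4 < 2 ∨ 4 * (n / 4) ≤ i.val))).card
      = 2 * (n / 4) := by
    have himg : (univ.filter (fun i : Fin n => ¬(i.val % 4 < 2 ∨ 4 * (n / 4) ≤ i.val)))
        = (Finset.range (2 * (n / 4))).attach.image
            (fun j => (⟨4 * (j.1 / 2) + 2 + j.1 % 2, by
              have := Finset.mem_range.mp j.2
              omega⟩ : Fin n)) := by
      ext x
      simp only [Finset.mem_filter, Finset.mem_univ, true_and, Finset.mem_image,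
        Finset.mem_attach, not_or, not_lt, not_le]
      constructor
      · rintro ⟨hx1, hx2⟩
        refine ⟨⟨2 * (x.val / 4) + (x.val % 4 - 2), Finset.mem_range.mpr (by omega)⟩, ?_⟩
        apply Fin.ext
        simp only
        omega
      · rintro ⟨⟨j, hj⟩, rfl⟩
        have := Finset.mem_range.mp hj
        simp only
        constructor <;> omega
    rw [himg, Finset.card_image_of_injective, Finset.card_attach, Finset.card_range]
    rintro ⟨a, ha⟩ ⟨b, hb⟩ hab
    have hval : (4 * (a / 2) + 2 + a % 2 : ℕ) = 4 * (b / 2) + 2 + b % 2 :=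
      congrArg Fin.val hab
    have ha' := Finset.mem_range.mp ha
    have hb' := Finset.mem_range.mp hb
    exact Subtype.ext (show a = b by omega)
  have := Finset.card_filter_add_card_filter_not
    (s := (univ : Finset (Fin n))) (p := fun i : Fin n => i.val % 4 < 2 ∨ 4 * (n / 4) ≤ i.val)
  rw [Finset.card_univ, Fintype.card_fin] at this
  omega
end upper

theorem stmt_9' (n : ℕ) (hn : 4 ≤ n) :
    sInf {m | ∃ S : Set (Fin n), IsKTRDS (SimpleGraph.cycleGraph n) 1 S ∧ S.ncard = m} =
      if n % 4 = 1 then 2 * ((n + 3) / 4) - 1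
      else if n % 4 = 3 then 2 * ((n + 3) / 4) + 1
      else 2 * ((n + 3) / 4) := by
  haveI : NeZero n := ⟨by omega⟩
  have hmem : (n - 2 * (n / 4)) ∈
      {m | ∃ S : Set (Fin n), IsKTRDS (SimpleGraph.cycleGraph n) 1 S ∧ S.ncard = m} :=
    ⟨S0 n, (ktrds_iff hn _).mpr ⟨S0_h1 hn, S0_h2 hn⟩, S0_card hn⟩
  have heq : sInf {m | ∃ S : Set (Fin n), IsKTRDS (SimpleGraph.cycleGraph n) 1 S ∧ S.ncard = m}
      = n - 2 * (n / 4) := by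
    apply le_antisymm (Nat.sInf_le hmem)
    apply le_csInf ⟨_, hmem⟩
    rintro m ⟨S, hS, rfl⟩
    obtain ⟨hA, hB⟩ := (ktrds_iff hn S).mp hS
    exact lower hn S hA hB
  rw [heq]
  have h4 : 0 < 4 := by norm_num
  split_ifs <;> omega

theorem stmt_9 (n : ℕ) (hn : 4 ≤ n) :
    ktrdNum (SimpleGraph.cycleGraph n) 1 =
      if n % 4 = 1 then 2 * ((n + 3) / 4) - 1
      else if n % 4 = 3 then 2 * ((n + 3) / 4) + 1
      else 2 * ((n + 3) / 4) := by
  unfold ktrdNum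
  exact stmt_9' n hn
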